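/- In the betweenness centrality game, a network g is an APSN if and only if g has at most one connected component with at least two vertices (all other vertices being isolated), and this component C — if it exists — satisfies: every vertex of C has degree at least 2; C has diameter exactly 2; and for all distinct i, j ∈ C, ij ∈ E(g) if and only if neither N_g(i)∖{j} ⊆ N_g(j)∖{i} nor N_g(j)∖{i} ⊆ N_g(i)∖{j} (i.e., ij is an edge exactly when neither of i, j dominates the other in the vicinal preorder). -/
import Mathlib


open SimpleGraph

/-- Degree of vertex `i` in network `g`. -/
noncomputable def deg {V : Type*} (g : SimpleGraph V) (i : V) : ℕ :=
  Nat.card (g.neighborSet i)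

/-- The network `g` with the (missing) edge `ij` added. -/
def addE {V : Type*} (g : SimpleGraph V) (i j : V) : SimpleGraph V :=
  g ⊔ SimpleGraph.fromEdgeSet {s(i, j)}

/-- The network `g` with the edge `ij` removed. -/
def delE {V : Type*} (g : SimpleGraph V) (i j : V) : SimpleGraph V :=
  g.deleteEdges {s(i, j)}

/-- Utility of agent `i` in the game with centralities `C` and edge cost `c`. -/
noncomputable def util {V : Type*} (C : V → SimpleGraph V → ℝ) (c : ℝ) (i : V)
    (g : SimpleGraph V) : ℝ :=
  C i g - c * (deg g i)

/-- Adding the missing edge `ij` is an improving move. -/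
def ImprovingAdd {V : Type*} (C : V → SimpleGraph V → ℝ) (c : ℝ) (g : SimpleGraph V)
    (i j : V) : Prop :=
  util C c i (addE g i j) ≥ util C c i g ∧ util C c j (addE g i j) ≥ util C c j g ∧
    (util C c i (addE g i j) > util C c i g ∨ util C c j (addE g i j) > util C c j g)

/-- Deleting the edge `ij` is an improving move. -/
def ImprovingDel {V : Type*} (C : V → SimpleGraph V → ℝ) (c : ℝ) (g : SimpleGraph V)
    (i j : V) : Prop :=
  util C c i (delE g i j) > util C c i g ∨ util C c j (delE g i j) > util C c j g

/-- `g` is pairwise stable at edge cost `c`. -/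
def PairwiseStable {V : Type*} (C : V → SimpleGraph V → ℝ) (c : ℝ) (g : SimpleGraph V) : Prop :=
  (∀ i j : V, i ≠ j → ¬ g.Adj i j → ¬ ImprovingAdd C c g i j) ∧
  (∀ i j : V, g.Adj i j → ¬ ImprovingDel C c g i j)

/-- `g` is asymptotically pairwise stable. -/
def APSN {V : Type*} (C : V → SimpleGraph V → ℝ) (g : SimpleGraph V) : Prop :=
  ∃ ε₀ : ℝ, 0 < ε₀ ∧ ∀ c : ℝ, 0 < c → c < ε₀ → PairwiseStable C c g

/-- Axiom 1: the centrality of agent `i` is increasing. -/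
def Axiom1 {V : Type*} (C : V → SimpleGraph V → ℝ) (i : V) : Prop :=
  ∀ (g : SimpleGraph V) (j : V), j ≠ i → ¬ g.Adj i j → C i (addE g i j) > C i g

/-- Axiom 1′: the centrality of agent `i` is decreasing. -/
def Axiom1' {V : Type*} (C : V → SimpleGraph V → ℝ) (i : V) : Prop :=
  ∀ (g : SimpleGraph V) (j : V), j ≠ i → ¬ g.Adj i j → C i (addE g i j) < C i g

/-- Axiom 2: the centrality of agent `i` is componentwise. -/
def Axiom2 {V : Type*} (C : V → SimpleGraph V → ℝ) (i : V) : Prop :=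
  ∀ (g : SimpleGraph V) (j : V), j ≠ i → ¬ g.Adj i j →
    ((g.Reachable i j → C i (addE g i j) > C i g) ∧
     (¬ g.Reachable i j → C i (addE g i j) ≤ C i g))

/-- Axiom 2′: the centrality of agent `i` is peripheral. -/
def Axiom2' {V : Type*} (C : V → SimpleGraph V → ℝ) (i : V) : Prop :=
  ∀ (g : SimpleGraph V) (j : V), j ≠ i → ¬ g.Adj i j →
    ((g.Reachable i j → C i (addE g i j) ≤ C i g) ∧
     (¬ g.Reachable i j → C i (addE g i j) > C i g))

/-- The centrality of agent `i` is degree homophilic with (strictly increasing) `f`. -/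
def DegreeHomophilic {V : Type*} (C : V → SimpleGraph V → ℝ) (i : V) (f : ℕ → ℤ) : Prop :=
  ∀ (g : SimpleGraph V) (j : V), j ≠ i → ¬ g.Adj i j →
    (C i (addE g i j) > C i g ↔ (deg g j : ℤ) ≤ f (deg g i))

/-- The number of shortest paths between `y` and `z` in `g`
(`0` if `y` and `z` are in different components). -/
noncomputable def sigmaAll {V : Type*} (g : SimpleGraph V) (y z : V) : ℕ :=
  Nat.card {p : g.Path y z // p.1.length = g.dist y z}

/-- The number of shortest paths between `y` and `z` in `g` passing through `i`. -/
noncomputable def sigmaThr {V : Type*} (g : SimpleGraph V) (y z i : V) : ℕ :=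
  Nat.card {p : g.Path y z // p.1.length = g.dist y z ∧ i ∈ p.1.support}

open scoped Classical in
/-- Betweenness centrality of `i` in `g`: the sum over unordered pairs `{y,z} ⊆ V∖{i}`
of `σ_yz(i)/σ_yz(g)` (summands with `σ_yz(g) = 0` vanish, since `x/0 = 0` in `ℝ`). -/
noncomputable def btw {V : Type*} [Fintype V] (g : SimpleGraph V) (i : V) : ℝ :=
  (1 / 2) * ∑ y : V, ∑ z : V,
    if y ≠ z ∧ y ≠ i ∧ z ≠ i then (sigmaThr g y z i : ℝ) / (sigmaAll g y z : ℝ) else 0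

section Sec1
open SimpleGraph Finset

variable {V : Type*}

lemma addE_adj_iff (g : SimpleGraph V) (i j a b : V) :
    (addE g i j).Adj a b ↔ g.Adj a b ∨ (s(a, b) = s(i, j) ∧ a ≠ b) := by
  simp [addE, SimpleGraph.fromEdgeSet_adj]

lemma le_addE (g : SimpleGraph V) (i j : V) : g ≤ addE g i j := le_sup_left

lemma addE_comm (g : SimpleGraph V) (i j : V) : addE g i j = addE g j i := by
  simp [addE, Sym2.eq_swap]

lemma delE_adj_iff (g : SimpleGraph V) (i j a b : V) :
    (delE g i j).Adj a b ↔ g.Adj a b ∧ s(a, b) ≠ s(i, j) := by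
  simp [delE, SimpleGraph.deleteEdges_adj]

lemma delE_le (g : SimpleGraph V) (i j : V) : delE g i j ≤ g :=
  SimpleGraph.deleteEdges_le _

lemma delE_comm (g : SimpleGraph V) (i j : V) : delE g i j = delE g j i := by
  simp [delE, Sym2.eq_swap]

lemma not_delE_adj (g : SimpleGraph V) (i j : V) : ¬ (delE g i j).Adj i j := by
  simp [delE_adj_iff]

lemma addE_delE {g : SimpleGraph V} {i j : V} (h : g.Adj i j) :
    addE (delE g i j) i j = g := by
  ext a b
  rw [addE_adj_iff, delE_adj_iff]
  constructor
  · rintro (⟨h1, -⟩ | ⟨h1, h2⟩)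
    · exact h1
    · rw [Sym2.eq_iff] at h1
      rcases h1 with ⟨rfl, rfl⟩ | ⟨rfl, rfl⟩
      · exact h
      · exact h.symm
  · intro hab
    by_cases he : s(a, b) = s(i, j)
    · exact Or.inr ⟨he, hab.ne⟩
    · exact Or.inl ⟨hab, he⟩

lemma mem_edgeSet_addE {g : SimpleGraph V} {i j : V} (hij : i ≠ j) (e : Sym2 V) :
    e ∈ (addE g i j).edgeSet ↔ e ∈ g.edgeSet ∨ e = s(i, j) := by
  simp only [addE, SimpleGraph.edgeSet_sup, Set.mem_union, SimpleGraph.edgeSet_fromEdgeSet,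
    Set.mem_diff, Set.mem_singleton_iff, Set.mem_setOf_eq]
  constructor
  · rintro (h | ⟨rfl, -⟩)
    · exact Or.inl h
    · exact Or.inr rfl
  · rintro (h | rfl)
    · exact Or.inl h
    · exact Or.inr ⟨rfl, by simp [Sym2.isDiag_iff_proj_eq, hij]⟩

lemma neighborSet_addE_fst {g : SimpleGraph V} {i j : V} (hij : i ≠ j) :
    (addE g i j).neighborSet i = insert j (g.neighborSet i) := by
  ext a
  simp only [SimpleGraph.mem_neighborSet, Set.mem_insert_iff, addE_adj_iff, Sym2.eq_iff]
  constructor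
  · rintro (h | ⟨⟨-, rfl⟩ | ⟨rfl, rfl⟩, hne⟩)
    · exact Or.inr h
    · exact Or.inl rfl
    · exact (hne rfl).elim
  · rintro (rfl | h)
    · exact Or.inr ⟨Or.inl ⟨trivial, rfl⟩, hij⟩
    · exact Or.inl h

lemma deg_addE_fst [Fintype V] {g : SimpleGraph V} {i j : V} (hij : i ≠ j) (hna : ¬ g.Adj i j) :
    deg (addE g i j) i = deg g i + 1 := by
  have : ∀ (h : SimpleGraph V) (v : V), deg h v = (h.neighborSet v).ncard := by
    intro h v; rw [deg, Nat.card_coe_set_eq]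
  rw [this, this, neighborSet_addE_fst hij,
    Set.ncard_insert_of_notMem (by simpa using hna) (Set.toFinite _)]

lemma neighborSet_delE_fst (g : SimpleGraph V) (i j : V) :
    (delE g i j).neighborSet i = g.neighborSet i \ {j} := by
  ext a
  simp only [SimpleGraph.mem_neighborSet, delE_adj_iff, Set.mem_diff, Set.mem_singleton_iff]
  constructor
  · rintro ⟨h1, h2⟩
    refine ⟨h1, fun h => h2 (by rw [h])⟩
  · rintro ⟨h1, h2⟩
    refine ⟨h1, fun h => ?_⟩
    rw [Sym2.eq_iff] at h
    rcases h with ⟨-, rfl⟩ | ⟨rfl, rfl⟩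
    · exact h2 rfl
    · exact h1.ne rfl

lemma deg_delE_fst [Fintype V] {g : SimpleGraph V} {i j : V} (h : g.Adj i j) :
    deg g i = deg (delE g i j) i + 1 := by
  have hh : ∀ (h : SimpleGraph V) (v : V), deg h v = (h.neighborSet v).ncard := by
    intro h v; rw [deg, Nat.card_coe_set_eq]
  rw [hh, hh, neighborSet_delE_fst]
  have hnm : j ∉ g.neighborSet i \ {j} := by simp
  rw [← Set.ncard_insert_of_notMem hnm (Set.toFinite _),
    Set.insert_diff_singleton, Set.insert_eq_self.2 (show j ∈ g.neighborSet i from h)]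

end Sec1
section Sec2
open SimpleGraph Finset

variable {V : Type*}

lemma exists_two_neighbors_of_mem_support {g : SimpleGraph V} {y z : V} (w : g.Walk y z)
    (hw : w.IsPath) {i : V} (hi : i ∈ w.support) (hy : i ≠ y) (hz : i ≠ z) :
    ∃ a b, a ≠ b ∧ g.Adj i a ∧ g.Adj i b := by
  induction w with
  | nil =>
    rw [SimpleGraph.Walk.support_nil, List.mem_singleton] at hi
    exact (hy hi).elim
  | @cons u v t h q ih =>
    rw [SimpleGraph.Walk.support_cons, List.mem_cons] at hi
    rcases hi with rfl | hi
    · exact (hy rfl).elim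
    · by_cases hiv : i = v
      · subst hiv
        cases q with
        | nil => exact (hz rfl).elim
        | @cons _ b _ h' q' =>
          refine ⟨u, b, fun hub => ?_, h.symm, h'⟩
          rw [SimpleGraph.Walk.cons_isPath_iff] at hw
          apply hw.2
          rw [hub, SimpleGraph.Walk.support_cons]
          exact List.mem_cons_of_mem _ q'.start_mem_support
      · exact ih hw.of_cons hi hiv hz

lemma two_le_deg_of_interior [Fintype V] {g : SimpleGraph V} {y z i : V} (w : g.Walk y z)
    (hw : w.IsPath) (hi : i ∈ w.support) (hy : i ≠ y) (hz : i ≠ z) : 2 ≤ deg g i := by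
  obtain ⟨a, b, hab, ha, hb⟩ := exists_two_neighbors_of_mem_support w hw hi hy hz
  rw [deg, Nat.card_coe_set_eq]
  exact (Set.one_lt_ncard_iff (Set.toFinite _)).2 ⟨a, b, ha, hb, hab⟩

lemma sigmaThr_eq_zero_of_deg_le_one [Fintype V] {g : SimpleGraph V} {y z i : V}
    (h : deg g i ≤ 1) (hy : i ≠ y) (hz : i ≠ z) : sigmaThr g y z i = 0 := by
  rw [sigmaThr, Nat.card_eq_zero]
  left
  refine ⟨fun p => ?_⟩
  have := two_le_deg_of_interior p.1.1 p.1.2 p.2.2 hy hz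
  omega

lemma walk_length_two_struct {g : SimpleGraph V} {y z : V} (w : g.Walk y z)
    (h2 : w.length = 2) : ∃ m, g.Adj y m ∧ g.Adj m z ∧ w.support = [y, m, z] := by
  cases w with
  | nil => simp at h2
  | @cons _ v _ h q =>
    cases q with
    | nil => simp at h2
    | @cons _ b _ h' q' =>
      cases q' with
      | nil => exact ⟨v, h, h', by simp⟩
      | cons h'' q'' => simp [SimpleGraph.Walk.length_cons] at h2

lemma adj_adj_of_mem_support_length_two {g : SimpleGraph V} {y z i : V} (w : g.Walk y z)
    (h2 : w.length = 2) (hi : i ∈ w.support) (hy : i ≠ y) (hz : i ≠ z) :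
    g.Adj y i ∧ g.Adj i z := by
  obtain ⟨m, hm1, hm2, hsup⟩ := walk_length_two_struct w h2
  rw [hsup] at hi
  simp only [List.mem_cons, List.mem_singleton, List.not_mem_nil, or_false] at hi
  rcases hi with rfl | rfl | rfl
  · exact (hy rfl).elim
  · exact ⟨hm1, hm2⟩
  · exact (hz rfl).elim

lemma notMem_support_of_length_le_one {g : SimpleGraph V} {y z i : V} (w : g.Walk y z)
    (h1 : w.length ≤ 1) (hy : i ≠ y) (hz : i ≠ z) : i ∉ w.support := by
  intro hi
  cases w with
  | nil =>
    rw [SimpleGraph.Walk.support_nil, List.mem_singleton] at hi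
    exact hy hi
  | cons h q =>
    cases q with
    | nil =>
      rw [SimpleGraph.Walk.support_cons, SimpleGraph.Walk.support_nil] at hi
      simp only [List.mem_cons, List.mem_singleton, List.not_mem_nil, or_false] at hi
      rcases hi with rfl | rfl
      · exact hy rfl
      · exact hz rfl
    | cons h' q' => simp [SimpleGraph.Walk.length_cons] at h1

lemma reachable_addE_iff {g : SimpleGraph V} {i j : V} (hr : g.Reachable i j) {y z : V} :
    (addE g i j).Reachable y z ↔ g.Reachable y z := by
  constructor
  · rintro ⟨w⟩
    induction w with
    | nil => exact SimpleGraph.Reachable.refl _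
    | @cons u v t h q ih =>
      refine SimpleGraph.Reachable.trans ?_ ih
      rw [addE_adj_iff] at h
      rcases h with h | ⟨he, hne⟩
      · exact h.reachable
      · rw [Sym2.eq_iff] at he
        rcases he with ⟨rfl, rfl⟩ | ⟨rfl, rfl⟩
        · exact hr
        · exact hr.symm
  · exact fun h => h.mono (le_addE g i j)

lemma exists_adj_dist_step {g : SimpleGraph V} {u v : V} {n : ℕ} (h : g.dist u v = n + 1) :
    ∃ x, g.Adj u x ∧ g.dist x v = n := by
  have hr : g.Reachable u v := by
    apply SimpleGraph.Reachable.of_dist_ne_zero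
    omega
  obtain ⟨w, hw⟩ := hr.exists_walk_length_eq_dist
  rw [h] at hw
  cases w with
  | nil => simp at hw
  | @cons _ b _ hadj q =>
    rw [SimpleGraph.Walk.length_cons] at hw
    have hql : q.length = n := by omega
    have hle : g.dist b v ≤ n := hql ▸ SimpleGraph.dist_le q
    refine ⟨b, hadj, le_antisymm hle ?_⟩
    obtain ⟨w2, hw2⟩ := (SimpleGraph.Reachable.mono le_rfl ⟨q⟩ :
      g.Reachable b v).exists_walk_length_eq_dist
    have := SimpleGraph.dist_le (SimpleGraph.Walk.cons hadj w2)
    rw [SimpleGraph.Walk.length_cons, hw2, h] at this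
    omega

lemma exists_dist_eq_three {g : SimpleGraph V} {u v : V} (h : 3 ≤ g.dist u v) :
    ∃ a b, g.dist a b = 3 := by
  obtain ⟨d, hd⟩ : ∃ d, g.dist u v = d + 3 := ⟨g.dist u v - 3, by omega⟩
  clear h
  induction d generalizing u v with
  | zero => exact ⟨u, v, hd⟩
  | succ d ih =>
    obtain ⟨x, -, hx⟩ := exists_adj_dist_step (show g.dist u v = (d + 3) + 1 by omega)
    exact ih hx

end Sec2
section Sec3
open SimpleGraph Finset

variable {V : Type*} [Fintype V]

lemma path_finite (g : SimpleGraph V) (y z : V) : Finite (g.Path y z) := by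
  classical
  infer_instance

lemma nat_card_subtype_split {α : Type*} [Finite α] (P Q : α → Prop) :
    Nat.card {x // P x} = Nat.card {x // P x ∧ Q x} + Nat.card {x // P x ∧ ¬ Q x} := by
  classical
  cases nonempty_fintype α
  simp only [Nat.card_eq_fintype_card, Fintype.card_subtype]
  have h1 : (univ : Finset α).filter P
      = (univ : Finset α).filter (fun x => (P x ∧ Q x) ∨ (P x ∧ ¬ Q x)) := by
    apply filter_congr
    intro x _
    by_cases hq : Q x <;> simp [hq]
  rw [h1, filter_or, card_union_of_disjoint]
  rw [Finset.disjoint_left]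
  intro a ha hb
  rw [mem_filter] at ha hb
  exact hb.2.2 ha.2.2

lemma sigmaAll_pos {g : SimpleGraph V} {y z : V} (h : g.Reachable y z) :
    0 < sigmaAll g y z := by
  classical
  have : Finite (g.Path y z) := path_finite g y z
  rw [sigmaAll, Nat.card_pos_iff]
  obtain ⟨p, hp, hl⟩ := h.exists_path_of_dist
  exact ⟨⟨⟨⟨p, hp⟩, hl⟩⟩, Subtype.finite⟩

lemma sigmaAll_eq_zero {g : SimpleGraph V} {y z : V} (h : ¬ g.Reachable y z) :
    sigmaAll g y z = 0 := by
  rw [sigmaAll, Nat.card_eq_zero]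
  exact Or.inl ⟨fun p => h ⟨p.1.1⟩⟩

lemma sigmaThr_eq_zero {g : SimpleGraph V} {y z : V} (h : ¬ g.Reachable y z) (w : V) :
    sigmaThr g y z w = 0 := by
  rw [sigmaThr, Nat.card_eq_zero]
  exact Or.inl ⟨fun p => h ⟨p.1.1⟩⟩

lemma sigmaThr_le_sigmaAll (g : SimpleGraph V) (y z w : V) :
    sigmaThr g y z w ≤ sigmaAll g y z := by
  classical
  have : Finite (g.Path y z) := path_finite g y z
  have : Finite {p : g.Path y z // p.1.length = g.dist y z} := Subtype.finite
  refine Nat.card_le_card_of_injective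
    (fun q => ⟨q.1, q.2.1⟩) ?_
  intro a b hab
  simp only [Subtype.mk.injEq] at hab
  exact Subtype.ext hab

lemma sigmaThr_eq_sigmaAll {g : SimpleGraph V} {y z w : V}
    (h : ∀ p : g.Path y z, p.1.length = g.dist y z → w ∈ p.1.support) :
    sigmaThr g y z w = sigmaAll g y z := by
  rw [sigmaThr, sigmaAll]
  apply Nat.card_congr
  apply Equiv.subtypeEquivRight
  intro p
  exact ⟨fun hp => hp.1, fun hp => ⟨hp, h p hp⟩⟩

/-- The central bijection: paths of `addE g i j` avoiding the new edge correspond to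
paths of `g`, preserving length and support. -/
lemma card_paths_avoid (g : SimpleGraph V) (i j y z : V) (hna : ¬ g.Adj i j)
    (n : ℕ) (P : List V → Prop) :
    Nat.card {p : (addE g i j).Path y z //
        (p.1.length = n ∧ P p.1.support) ∧ s(i, j) ∉ p.1.edges}
      = Nat.card {p : g.Path y z // p.1.length = n ∧ P p.1.support} := by
  apply Nat.card_congr
  have hle : g ≤ addE g i j := le_addE g i j
  refine
    { toFun := fun q => ?_
      invFun := fun q => ?_
      left_inv := ?_
      right_inv := ?_ }
  · -- transfer from addE to g
    refine ⟨⟨q.1.1.transfer g (fun e he => ?_), q.1.2.transfer _⟩, ?_⟩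
    · have he' : e ∈ (addE g i j).edgeSet := q.1.1.edges_subset_edgeSet he
      by_cases hij : i = j
      · rw [addE] at he'
        rw [SimpleGraph.edgeSet_sup, Set.mem_union] at he'
        rcases he' with h | h
        · exact h
        · rw [SimpleGraph.edgeSet_fromEdgeSet] at h
          exfalso
          rw [Set.mem_diff, Set.mem_singleton_iff] at h
          apply h.2
          rw [h.1, ← hij]
          exact Sym2.mk_isDiag_iff.2 rfl
      · rcases (mem_edgeSet_addE hij e).1 he' with h | rfl
        · exact h
        · exact (q.2.2 he).elim
    · simpa [SimpleGraph.Walk.length_transfer, SimpleGraph.Walk.support_transfer] using q.2.1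
  · -- transfer from g to addE
    refine ⟨⟨q.1.1.transfer (addE g i j)
      (fun e he => (SimpleGraph.edgeSet_mono hle) (q.1.1.edges_subset_edgeSet he)),
      q.1.2.transfer _⟩, ⟨?_, ?_⟩⟩
    · simpa [SimpleGraph.Walk.length_transfer, SimpleGraph.Walk.support_transfer] using q.2
    · rw [SimpleGraph.Walk.edges_transfer]
      intro hmem
      exact hna (q.1.1.edges_subset_edgeSet hmem)
  · intro q
    apply Subtype.ext
    apply Subtype.ext
    show ((q.1.1.transfer g _).transfer (addE g i j) _) = q.1.1
    rw [SimpleGraph.Walk.transfer_transfer, SimpleGraph.Walk.transfer_self]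
  · intro q
    apply Subtype.ext
    apply Subtype.ext
    show ((q.1.1.transfer (addE g i j) _).transfer g _) = q.1.1
    rw [SimpleGraph.Walk.transfer_transfer, SimpleGraph.Walk.transfer_self]

end Sec3
section Sec4
open SimpleGraph Finset

variable {V : Type*} [Fintype V]

omit [Fintype V] in
lemma edges_in_g {g : SimpleGraph V} {i j y z : V} (p : (addE g i j).Walk y z)
    (he : s(i, j) ∉ p.edges) : ∀ e ∈ p.edges, e ∈ g.edgeSet := by
  intro e hmem
  have he' : e ∈ (addE g i j).edgeSet := p.edges_subset_edgeSet hmem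
  by_cases hij : i = j
  · rw [addE, SimpleGraph.edgeSet_sup, Set.mem_union] at he'
    rcases he' with h | h
    · exact h
    · rw [SimpleGraph.edgeSet_fromEdgeSet, Set.mem_diff, Set.mem_singleton_iff] at h
      exfalso
      apply h.2
      rw [h.1, ← hij]
      exact Sym2.mk_isDiag_iff.2 rfl
  · rcases (mem_edgeSet_addE hij e).1 he' with h | rfl
    · exact h
    · exact (he hmem).elim

omit [Fintype V] in
lemma dist_addE_le {g : SimpleGraph V} (i j : V) {y z : V} (h : g.Reachable y z) :
    (addE g i j).dist y z ≤ g.dist y z := by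
  obtain ⟨w, hw⟩ := h.exists_walk_length_eq_dist
  have := SimpleGraph.dist_le (w.transfer (addE g i j)
    (fun e he => SimpleGraph.edgeSet_mono (le_addE g i j) (w.edges_subset_edgeSet he)))
  rwa [SimpleGraph.Walk.length_transfer, hw] at this

omit [Fintype V] in
lemma dist_addE_eq_of_avoid {g : SimpleGraph V} {i j y z : V}
    (p : (addE g i j).Path y z) (hp : p.1.length = (addE g i j).dist y z)
    (he : s(i, j) ∉ p.1.edges) :
    g.Reachable y z ∧ (addE g i j).dist y z = g.dist y z := by
  set q := p.1.transfer g (edges_in_g p.1 he) with hq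
  have hr : g.Reachable y z := ⟨q⟩
  refine ⟨hr, le_antisymm (dist_addE_le i j hr) ?_⟩
  have := SimpleGraph.dist_le q
  rwa [hq, SimpleGraph.Walk.length_transfer, hp] at this

lemma sigmaThr_addE_eq_sigmaAll {g : SimpleGraph V} {i j y z : V}
    (hall : ∀ p : (addE g i j).Path y z,
      p.1.length = (addE g i j).dist y z → s(i, j) ∈ p.1.edges) :
    sigmaThr (addE g i j) y z i = sigmaAll (addE g i j) y z :=
  sigmaThr_eq_sigmaAll (fun p hp => p.1.fst_mem_support_of_mem_edges (hall p hp))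

lemma sigma_addE_split {g : SimpleGraph V} {i j y z : V} (hna : ¬ g.Adj i j)
    (hd : (addE g i j).dist y z = g.dist y z) :
    sigmaAll (addE g i j) y z
        = sigmaAll g y z + Nat.card {p : (addE g i j).Path y z //
            p.1.length = (addE g i j).dist y z ∧ s(i, j) ∈ p.1.edges}
      ∧ sigmaThr (addE g i j) y z i
        = sigmaThr g y z i + Nat.card {p : (addE g i j).Path y z //
            p.1.length = (addE g i j).dist y z ∧ s(i, j) ∈ p.1.edges} := by
  have hfin : Finite ((addE g i j).Path y z) := path_finite _ y z
  constructor
  · rw [sigmaAll, nat_card_subtype_split (fun p : (addE g i j).Path y z =>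
      p.1.length = (addE g i j).dist y z) (fun p => s(i, j) ∈ p.1.edges)]
    rw [Nat.add_comm]
    congr 1
    have h1 : Nat.card {p : (addE g i j).Path y z //
        p.1.length = (addE g i j).dist y z ∧ s(i, j) ∉ p.1.edges}
        = Nat.card {p : (addE g i j).Path y z //
          (p.1.length = (addE g i j).dist y z ∧ True) ∧ s(i, j) ∉ p.1.edges} :=
      Nat.card_congr (Equiv.subtypeEquivRight (fun p => by tauto))
    rw [h1, card_paths_avoid g i j y z hna ((addE g i j).dist y z) (fun _ => True)]
    rw [sigmaAll]
    exact Nat.card_congr (Equiv.subtypeEquivRight (fun p => by rw [hd]; tauto))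
  · rw [sigmaThr, nat_card_subtype_split (fun p : (addE g i j).Path y z =>
      p.1.length = (addE g i j).dist y z ∧ i ∈ p.1.support) (fun p => s(i, j) ∈ p.1.edges)]
    rw [Nat.add_comm]
    congr 1
    · rw [card_paths_avoid g i j y z hna ((addE g i j).dist y z) (fun l => i ∈ l)]
      rw [sigmaThr]
      exact Nat.card_congr (Equiv.subtypeEquivRight (fun p => by rw [hd]))
    · exact Nat.card_congr (Equiv.subtypeEquivRight (fun p =>
        ⟨fun h => ⟨h.1.1, h.2⟩,
         fun h => ⟨⟨h.1, p.1.fst_mem_support_of_mem_edges h.2⟩, h.2⟩⟩))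

end Sec4
section Sec5
open SimpleGraph Finset

variable {V : Type*} [Fintype V]

/-- For an endpoint `i` of the added edge, every pair-contribution weakly increases. -/
lemma phi_addE_mono {g : SimpleGraph V} {i j : V} (hna : ¬ g.Adj i j) (y z : V) :
    (sigmaThr g y z i : ℝ) / (sigmaAll g y z)
      ≤ (sigmaThr (addE g i j) y z i : ℝ) / (sigmaAll (addE g i j) y z) := by
  by_cases hr' : (addE g i j).Reachable y z
  · by_cases hav : ∃ p : (addE g i j).Path y z,
        p.1.length = (addE g i j).dist y z ∧ s(i, j) ∉ p.1.edges
    · obtain ⟨p, hp1, hp2⟩ := hav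
      obtain ⟨hreach, hd⟩ := dist_addE_eq_of_avoid p hp1 hp2
      obtain ⟨h1, h2⟩ := sigma_addE_split hna hd
      rw [h1, h2]
      have hts : sigmaThr g y z i ≤ sigmaAll g y z := sigmaThr_le_sigmaAll g y z i
      have hs : 0 < sigmaAll g y z := sigmaAll_pos hreach
      rw [div_le_div_iff₀ (by exact_mod_cast hs) (by positivity)]
      push_cast
      have hE : (0:ℝ) ≤ (Nat.card {p : (addE g i j).Path y z //
        p.1.length = (addE g i j).dist y z ∧ s(i, j) ∈ p.1.edges} : ℝ) := Nat.cast_nonneg _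
      have hts' : (sigmaThr g y z i : ℝ) ≤ (sigmaAll g y z : ℝ) := Nat.cast_le.2 hts
      nlinarith [mul_nonneg (sub_nonneg.2 hts') hE]
    · push_neg at hav
      rw [sigmaThr_addE_eq_sigmaAll (fun p hp => hav p hp)]
      have hs' : (0 : ℝ) < sigmaAll (addE g i j) y z := by
        exact_mod_cast sigmaAll_pos hr'
      rw [div_self (ne_of_gt hs')]
      by_cases hs : sigmaAll g y z = 0
      · rw [hs]
        norm_num
      · apply div_le_one_of_le₀
        · exact_mod_cast sigmaThr_le_sigmaAll g y z i
        · positivity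
  · have hr : ¬ g.Reachable y z := fun h => hr' (h.mono (le_addE g i j))
    rw [sigmaAll_eq_zero hr, sigmaAll_eq_zero hr', sigmaThr_eq_zero hr, sigmaThr_eq_zero hr']

/-- If no shortest path between `y` and `z` in `addE g i j` uses the new edge, then the
pair contributions are unchanged (for any interior vertex `w`). -/
lemma sigma_addE_invariant {g : SimpleGraph V} {i j y z : V} (hna : ¬ g.Adj i j)
    (hno : ∀ p : (addE g i j).Path y z,
      p.1.length = (addE g i j).dist y z → s(i, j) ∉ p.1.edges) :
    sigmaAll (addE g i j) y z = sigmaAll g y z ∧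
      ∀ w, sigmaThr (addE g i j) y z w = sigmaThr g y z w := by
  by_cases hr' : (addE g i j).Reachable y z
  · have hex : ∃ p : (addE g i j).Path y z, p.1.length = (addE g i j).dist y z := by
      obtain ⟨p, hp, hl⟩ := hr'.exists_path_of_dist
      exact ⟨⟨p, hp⟩, hl⟩
    obtain ⟨p, hp⟩ := hex
    obtain ⟨hreach, hd⟩ := dist_addE_eq_of_avoid p hp (hno p hp)
    constructor
    · have h1 : sigmaAll (addE g i j) y z = Nat.card {p : (addE g i j).Path y z //
          (p.1.length = (addE g i j).dist y z ∧ True) ∧ s(i, j) ∉ p.1.edges} := by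
        rw [sigmaAll]
        exact Nat.card_congr (Equiv.subtypeEquivRight (fun q =>
          ⟨fun h => ⟨⟨h, trivial⟩, hno q h⟩, fun h => h.1.1⟩))
      rw [h1, card_paths_avoid g i j y z hna _ (fun _ => True), sigmaAll]
      exact Nat.card_congr (Equiv.subtypeEquivRight (fun q => by rw [hd]; tauto))
    · intro w
      have h1 : sigmaThr (addE g i j) y z w = Nat.card {p : (addE g i j).Path y z //
          (p.1.length = (addE g i j).dist y z ∧ w ∈ p.1.support) ∧ s(i, j) ∉ p.1.edges} := by
        rw [sigmaThr]
        exact Nat.card_congr (Equiv.subtypeEquivRight (fun q =>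
          ⟨fun h => ⟨h, hno q h.1⟩, fun h => h.1⟩))
      rw [h1, card_paths_avoid g i j y z hna _ (fun l => w ∈ l), sigmaThr]
      exact Nat.card_congr (Equiv.subtypeEquivRight (fun q => by rw [hd]))
  · have hr : ¬ g.Reachable y z := fun h => hr' (h.mono (le_addE g i j))
    exact ⟨by rw [sigmaAll_eq_zero hr, sigmaAll_eq_zero hr'],
      fun w => by rw [sigmaThr_eq_zero hr, sigmaThr_eq_zero hr']⟩

lemma btw_addE_mono {g : SimpleGraph V} {i j : V} (hna : ¬ g.Adj i j) :
    btw g i ≤ btw (addE g i j) i := by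
  unfold _root_.btw
  apply mul_le_mul_of_nonneg_left _ (by norm_num)
  apply Finset.sum_le_sum
  intro y _
  apply Finset.sum_le_sum
  intro z _
  by_cases h : y ≠ z ∧ y ≠ i ∧ z ≠ i
  · rw [if_pos h, if_pos h]
    exact phi_addE_mono hna y z
  · rw [if_neg h, if_neg h]

lemma btw_addE_strict {g : SimpleGraph V} {i j : V} (hna : ¬ g.Adj i j) (y₀ z₀ : V)
    (hyz : y₀ ≠ z₀) (hy : y₀ ≠ i) (hz : z₀ ≠ i)
    (hstrict : (sigmaThr g y₀ z₀ i : ℝ) / (sigmaAll g y₀ z₀)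
      < (sigmaThr (addE g i j) y₀ z₀ i : ℝ) / (sigmaAll (addE g i j) y₀ z₀)) :
    btw g i < btw (addE g i j) i := by
  unfold _root_.btw
  apply mul_lt_mul_of_pos_left _ (by norm_num : (0:ℝ) < 1/2)
  apply Finset.sum_lt_sum
  · intro y _
    apply Finset.sum_le_sum
    intro z _
    by_cases h : y ≠ z ∧ y ≠ i ∧ z ≠ i
    · rw [if_pos h, if_pos h]; exact phi_addE_mono hna y z
    · rw [if_neg h, if_neg h]
  · refine ⟨y₀, Finset.mem_univ _, ?_⟩
    apply Finset.sum_lt_sum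
    · intro z _
      by_cases h : y₀ ≠ z ∧ y₀ ≠ i ∧ z ≠ i
      · rw [if_pos h, if_pos h]; exact phi_addE_mono hna y₀ z
      · rw [if_neg h, if_neg h]
    · refine ⟨z₀, Finset.mem_univ _, ?_⟩
      rw [if_pos ⟨hyz, hy, hz⟩, if_pos ⟨hyz, hy, hz⟩]
      exact hstrict

lemma btw_addE_eq_of_no_change {g : SimpleGraph V} {i j : V} (hna : ¬ g.Adj i j)
    (hno : ∀ y z : V, y ≠ z → y ≠ i → z ≠ i →
      ∀ p : (addE g i j).Path y z,
        p.1.length = (addE g i j).dist y z → s(i, j) ∉ p.1.edges) :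
    btw (addE g i j) i = btw g i := by
  unfold _root_.btw
  congr 1
  apply Finset.sum_congr rfl
  intro y _
  apply Finset.sum_congr rfl
  intro z _
  by_cases h : y ≠ z ∧ y ≠ i ∧ z ≠ i
  · rw [if_pos h, if_pos h]
    obtain ⟨h1, h2⟩ := sigma_addE_invariant hna (hno y z h.1 h.2.1 h.2.2)
    rw [h1, h2]
  · rw [if_neg h, if_neg h]

lemma btw_nonneg (g : SimpleGraph V) (i : V) : 0 ≤ btw g i := by
  unfold _root_.btw
  apply mul_nonneg (by norm_num)
  apply Finset.sum_nonneg
  intro y _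
  apply Finset.sum_nonneg
  intro z _
  by_cases h : y ≠ z ∧ y ≠ i ∧ z ≠ i
  · rw [if_pos h]; positivity
  · rw [if_neg h]

lemma btw_eq_zero_of_sigmaThr_zero {g : SimpleGraph V} {i : V}
    (h : ∀ y z : V, y ≠ z → y ≠ i → z ≠ i → sigmaThr g y z i = 0) : btw g i = 0 := by
  unfold _root_.btw
  rw [mul_eq_zero]
  right
  apply Finset.sum_eq_zero
  intro y _
  apply Finset.sum_eq_zero
  intro z _
  by_cases hc : y ≠ z ∧ y ≠ i ∧ z ≠ i
  · rw [if_pos hc, h y z hc.1 hc.2.1 hc.2.2]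
    norm_num
  · rw [if_neg hc]

end Sec5
section Sec6a
open SimpleGraph Finset

variable {V : Type*} [Fintype V]

omit [Fintype V] in
lemma dist_eq_two' {g : SimpleGraph V} {y z : V} (hr : g.Reachable y z) (hne : y ≠ z)
    (hna : ¬ g.Adj y z) (hle : g.dist y z ≤ 2) : g.dist y z = 2 := by
  have h0 : g.dist y z ≠ 0 := fun h => hne (hr.dist_eq_zero_iff.1 h)
  have h1 : g.dist y z ≠ 1 := fun h => hna (SimpleGraph.dist_eq_one_iff_adj.1 h)
  omega

lemma sigmaThr_pos_of_path {g : SimpleGraph V} {y z i : V} (p : g.Path y z)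
    (hl : p.1.length = g.dist y z) (hi : i ∈ p.1.support) : 0 < sigmaThr g y z i := by
  have : Finite (g.Path y z) := path_finite g y z
  rw [sigmaThr, Nat.card_pos_iff]
  exact ⟨⟨⟨p, hl, hi⟩⟩, Subtype.finite⟩

lemma sigmaThr_lt_sigmaAll_of_witness {g : SimpleGraph V} {y z i : V} (p : g.Path y z)
    (hl : p.1.length = g.dist y z) (hi : i ∉ p.1.support) :
    sigmaThr g y z i < sigmaAll g y z := by
  classical
  rw [sigmaThr, sigmaAll, Nat.card_eq_fintype_card, Nat.card_eq_fintype_card,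
    Fintype.card_subtype, Fintype.card_subtype]
  apply Finset.card_lt_card
  constructor
  · intro q hq
    rw [Finset.mem_filter] at hq ⊢
    exact ⟨hq.1, hq.2.1⟩
  · intro hsub
    have := hsub (Finset.mem_filter.2 ⟨Finset.mem_univ p, hl⟩)
    rw [Finset.mem_filter] at this
    exact hi this.2.2

lemma sigmaThr_eq_zero_of_dist_le_one {g : SimpleGraph V} {y z i : V}
    (hd : g.dist y z ≤ 1) (hy : i ≠ y) (hz : i ≠ z) : sigmaThr g y z i = 0 := by
  rw [sigmaThr, Nat.card_eq_zero]
  left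
  refine ⟨fun p => ?_⟩
  have hlen : p.1.1.length ≤ 1 := by rw [p.2.1]; exact hd
  exact notMem_support_of_length_le_one p.1.1 hlen hy hz p.2.2

lemma sigmaThr_eq_zero_of_dist_two_not_adj {g : SimpleGraph V} {y z i : V}
    (hd : g.dist y z = 2) (hna : ¬ g.Adj y i) (hy : i ≠ y) (hz : i ≠ z) :
    sigmaThr g y z i = 0 := by
  rw [sigmaThr, Nat.card_eq_zero]
  left
  refine ⟨fun p => ?_⟩
  have hlen : p.1.1.length = 2 := by rw [p.2.1, hd]
  exact hna (adj_adj_of_mem_support_length_two p.1.1 hlen p.2.2 hy hz).1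

/-- Adding a bridge to an agent with a neighbor strictly increases its betweenness. -/
lemma btw_lt_addE_of_unreachable {g : SimpleGraph V} {i j k : V} (hr : ¬ g.Reachable i j)
    (hik : g.Adj i k) : btw g i < btw (addE g i j) i := by
  have hij : i ≠ j := fun h => hr (h ▸ SimpleGraph.Reachable.refl i)
  have hna : ¬ g.Adj i j := fun h => hr h.reachable
  have hkj : k ≠ j := fun h => hr (hik.reachable.trans (h ▸ SimpleGraph.Reachable.refl _))
  have hki : k ≠ i := fun h => (h ▸ hik).ne rfl
  have hji : j ≠ i := fun h => hij h.symm
  -- the strict pair (k, j)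
  apply btw_addE_strict hna k j hkj hki hji
  have hrkj : ¬ g.Reachable k j := fun h => hr (hik.reachable.trans h)
  rw [sigmaAll_eq_zero hrkj, sigmaThr_eq_zero hrkj]
  have hadj1 : (addE g i j).Adj k i := (le_addE g i j) hik.symm
  have hadj2 : (addE g i j).Adj i j := by
    rw [addE_adj_iff]
    exact Or.inr ⟨rfl, hij⟩
  have hreach' : (addE g i j).Reachable k j :=
    ⟨SimpleGraph.Walk.cons hadj1 (SimpleGraph.Walk.cons hadj2 SimpleGraph.Walk.nil)⟩
  have hall : ∀ p : (addE g i j).Path k j, p.1.length = (addE g i j).dist k j →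
      s(i, j) ∈ p.1.edges := by
    intro p _
    by_contra hne
    exact hrkj ⟨p.1.transfer g (edges_in_g p.1 hne)⟩
  rw [sigmaThr_eq_sigmaAll (fun p hp => p.1.fst_mem_support_of_mem_edges (hall p hp))]
  have hpos : (0 : ℝ) < sigmaAll (addE g i j) k j := by
    exact_mod_cast sigmaAll_pos hreach'
  rw [Nat.cast_zero, zero_div, div_self (ne_of_gt hpos)]
  norm_num

/-- Adding an edge `ij` at distance two where `k` witnesses non-domination of `i`
strictly increases the betweenness of `i`. -/
lemma btw_lt_addE_of_witness {g : SimpleGraph V} {i j k : V} (hij : i ≠ j)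
    (hna : ¬ g.Adj i j) (hik : g.Adj i k) (hkj : k ≠ j) (hjk : ¬ g.Adj j k)
    (hdjk : g.dist j k = 2) : btw g i < btw (addE g i j) i := by
  have hki : k ≠ i := fun h => (h ▸ hik).ne rfl
  have hji : j ≠ i := fun h => hij h.symm
  have hjk' : j ≠ k := fun h => hkj h.symm
  apply btw_addE_strict hna j k hjk' hji hki
  -- φ(g, j, k, i) = 0
  rw [sigmaThr_eq_zero_of_dist_two_not_adj hdjk (fun h => hna h.symm) hji.symm hki.symm]
  rw [Nat.cast_zero, zero_div]
  -- φ(addE, j, k, i) > 0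
  have hadj1 : (addE g i j).Adj j i := by
    rw [addE_adj_iff]
    exact Or.inr ⟨Sym2.eq_swap, hji⟩
  have hadj2 : (addE g i j).Adj i k := (le_addE g i j) hik
  have hnadj' : ¬ (addE g i j).Adj j k := by
    rw [addE_adj_iff]
    rintro (h | ⟨he, -⟩)
    · exact hjk h
    · rw [Sym2.eq_iff] at he
      rcases he with ⟨rfl, rfl⟩ | ⟨-, rfl⟩
      · exact hij rfl
      · exact hki rfl
  set p₀ : (addE g i j).Walk j k :=
    SimpleGraph.Walk.cons hadj1 (SimpleGraph.Walk.cons hadj2 SimpleGraph.Walk.nil) with hp₀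
  have hp₀path : p₀.IsPath := by
    rw [hp₀]
    simp only [SimpleGraph.Walk.cons_isPath_iff, SimpleGraph.Walk.isPath_iff_eq_nil,
      SimpleGraph.Walk.support_cons, SimpleGraph.Walk.support_nil, List.mem_cons,
      List.mem_singleton, List.not_mem_nil, or_false]
    refine ⟨⟨trivial, fun h => hki h.symm⟩, ?_⟩
    rintro (rfl | rfl)
    · exact hji rfl
    · exact hjk' rfl
  have hreach' : (addE g i j).Reachable j k := ⟨p₀⟩
  have hdist' : (addE g i j).dist j k = 2 := by
    have hle : (addE g i j).dist j k ≤ 2 := by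
      have := SimpleGraph.dist_le p₀
      simpa [hp₀] using this
    exact dist_eq_two' hreach' hjk' hnadj' hle
  have hlen : p₀.length = (addE g i j).dist j k := by rw [hdist']; simp [hp₀]
  have hmem : i ∈ p₀.support := by simp [hp₀]
  have ht : 0 < sigmaThr (addE g i j) j k i :=
    sigmaThr_pos_of_path ⟨p₀, hp₀path⟩ hlen hmem
  have hs : 0 < sigmaAll (addE g i j) j k := sigmaAll_pos hreach'
  apply div_pos
  · exact_mod_cast ht
  · exact_mod_cast hs

/-- Adding an edge between agents at distance three strictly increases
the betweenness of `i`. -/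
lemma btw_lt_addE_of_dist_three {g : SimpleGraph V} {i j : V} (h3 : g.dist i j = 3) :
    btw g i < btw (addE g i j) i := by
  have hij : i ≠ j := by
    intro h
    rw [h, SimpleGraph.dist_self] at h3
    omega
  have hna : ¬ g.Adj i j := by
    intro h
    rw [SimpleGraph.dist_eq_one_iff_adj.2 h] at h3
    omega
  obtain ⟨k, hik, hd⟩ := exists_adj_dist_step (show g.dist i j = 2 + 1 by omega)
  have hdjk : g.dist j k = 2 := by rw [SimpleGraph.dist_comm]; exact hd
  have hjk : ¬ g.Adj j k := by
    intro h
    rw [SimpleGraph.dist_eq_one_iff_adj.2 h] at hdjk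
    omega
  have hkj : k ≠ j := by
    intro h
    rw [h, SimpleGraph.dist_self] at hdjk
    omega
  exact btw_lt_addE_of_witness hij hna hik hkj hjk hdjk

end Sec6a
section Sec6b
open SimpleGraph Finset

variable {V : Type*} [Fintype V]

omit [Fintype V] in
lemma walk_length_two_edges {g : SimpleGraph V} {y z : V} (w : g.Walk y z)
    (h2 : w.length = 2) :
    ∃ m, g.Adj y m ∧ g.Adj m z ∧ w.support = [y, m, z] ∧ w.edges = [s(y, m), s(m, z)] := by
  cases w with
  | nil => simp at h2
  | @cons _ v _ h q =>
    cases q with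
    | nil => simp at h2
    | @cons _ b _ h' q' =>
      cases q' with
      | nil => exact ⟨v, h, h', by simp, by simp⟩
      | cons h'' q'' => simp [SimpleGraph.Walk.length_cons] at h2

/-- If `j` dominates `i`, no shortest path between `y, z ≠ i` (in a graph of diameter ≤ 2)
uses the edge `ij`. -/
lemma no_shortest_edge_of_dominated {h : SimpleGraph V} {i j y z : V}
    (hadj : h.Adj i j) (hdom : ∀ k, h.Adj i k → k ≠ j → h.Adj j k)
    (hd2 : h.dist y z ≤ 2) (hyz : y ≠ z) (hy : i ≠ y) (hz : i ≠ z)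
    (p : h.Path y z) (hp : p.1.length = h.dist y z) : s(i, j) ∉ p.1.edges := by
  intro hmem
  have hisup : i ∈ p.1.support := p.1.fst_mem_support_of_mem_edges hmem
  have hlen2 : p.1.length = 2 := by
    by_cases hl : p.1.length ≤ 1
    · exact absurd hisup (notMem_support_of_length_le_one _ hl hy hz)
    · omega
  have hdist2 : h.dist y z = 2 := by omega
  obtain ⟨m, h1, h2, hsup, hedges⟩ := walk_length_two_edges p.1 hlen2
  have hmi : m = i := by
    rw [hsup] at hisup
    simp only [List.mem_cons, List.mem_singleton, List.not_mem_nil, or_false] at hisup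
    rcases hisup with h' | h' | h'
    · exact absurd h' hy
    · exact h'.symm
    · exact absurd h' hz
  subst hmi
  rw [hedges] at hmem
  simp only [List.mem_cons, List.mem_singleton, List.not_mem_nil, or_false] at hmem
  rcases hmem with he | he
  · -- s(m,j) = s(y,m), so j = y
    rw [Sym2.eq_iff] at he
    have hjy : j = y := by
      rcases he with ⟨hmy, -⟩ | ⟨-, hjy⟩
      · exact absurd hmy hy
      · exact hjy
    have hzj : z ≠ j := fun hh => hyz (hjy ▸ hh).symm
    have : h.Adj y z := hjy ▸ hdom z h2 hzj
    rw [← SimpleGraph.dist_eq_one_iff_adj] at this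
    omega
  · -- s(m,j) = s(m,z), so j = z
    rw [Sym2.eq_iff] at he
    have hjz : j = z := by
      rcases he with ⟨-, hjz⟩ | ⟨hmz, -⟩
      · exact hjz
      · exact absurd hmz hz
    have hyj : y ≠ j := fun hh => hyz (hjz ▸ hh)
    have : h.Adj z y := hjz ▸ hdom y h1.symm hyj
    rw [← SimpleGraph.dist_eq_one_iff_adj, SimpleGraph.dist_comm] at this
    omega

lemma btw_addE_eq_of_dominated {g : SimpleGraph V} {i j : V} (hij : i ≠ j)
    (hna : ¬ g.Adj i j) (hrij : g.Reachable i j)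
    (hdom : ∀ k, g.Adj i k → k ≠ j → g.Adj j k)
    (hdiam : ∀ y z : V, g.Reachable y z → g.dist y z ≤ 2) :
    btw (addE g i j) i = btw g i := by
  apply btw_addE_eq_of_no_change hna
  intro y z hyz hyi hzi p hp
  have hreach' : (addE g i j).Reachable y z := ⟨p.1⟩
  have hreach : g.Reachable y z := (reachable_addE_iff hrij).1 hreach'
  have hd2 : (addE g i j).dist y z ≤ 2 :=
    le_trans (dist_addE_le i j hreach) (hdiam y z hreach)
  have hadj' : (addE g i j).Adj i j := by
    rw [addE_adj_iff]
    exact Or.inr ⟨rfl, hij⟩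
  have hdom' : ∀ k, (addE g i j).Adj i k → k ≠ j → (addE g i j).Adj j k := by
    intro k hk hkj
    rw [addE_adj_iff] at hk
    rcases hk with hk | ⟨he, hne⟩
    · exact (le_addE g i j) (hdom k hk hkj)
    · rw [Sym2.eq_iff] at he
      rcases he with ⟨-, hkj'⟩ | ⟨hij', -⟩
      · exact absurd hkj' hkj
      · exact absurd hij' hij
  exact no_shortest_edge_of_dominated hadj' hdom' hd2 hyz
    (fun hh => hyi hh.symm) (fun hh => hzi hh.symm) p hp

lemma btw_delE_eq_of_dominated {g : SimpleGraph V} {i j : V} (hadj : g.Adj i j)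
    (hdom : ∀ k, g.Adj i k → k ≠ j → g.Adj j k)
    (hdiam : ∀ y z : V, g.Reachable y z → g.dist y z ≤ 2) :
    btw (delE g i j) i = btw g i := by
  have hgg := addE_delE hadj
  have key : btw (addE (delE g i j) i j) i = btw (delE g i j) i := by
    apply btw_addE_eq_of_no_change (not_delE_adj g i j)
    intro y z hyz hyi hzi p hp
    have hadj' : (addE (delE g i j) i j).Adj i j := by rw [hgg]; exact hadj
    have hdom' : ∀ k, (addE (delE g i j) i j).Adj i k → k ≠ j →
        (addE (delE g i j) i j).Adj j k := by
      intro k hk hkj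
      rw [hgg] at hk ⊢
      exact hdom k hk hkj
    have hreach : g.Reachable y z := by
      have : (addE (delE g i j) i j).Reachable y z := ⟨p.1⟩
      rwa [hgg] at this
    have hd2 : (addE (delE g i j) i j).dist y z ≤ 2 := by
      rw [hgg]
      exact hdiam y z hreach
    exact no_shortest_edge_of_dominated hadj' hdom' hd2 hyz
      (fun hh => hyi hh.symm) (fun hh => hzi hh.symm) p hp
  rw [← key, hgg]

lemma btw_delE_mono {g : SimpleGraph V} {i j : V} (hadj : g.Adj i j) :
    btw (delE g i j) i ≤ btw g i := by
  have hgg := addE_delE hadj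
  have := btw_addE_mono (g := delE g i j) (i := i) (j := j) (not_delE_adj g i j)
  rwa [hgg] at this

end Sec6b
section Sec6c
open SimpleGraph Finset

variable {V : Type*} [Fintype V]

omit [Fintype V] in
lemma exists_common_of_dist_two {g : SimpleGraph V} {a b : V} (h : g.dist a b = 2) :
    ∃ m, g.Adj a m ∧ g.Adj m b := by
  have hr : g.Reachable a b := SimpleGraph.Reachable.of_dist_ne_zero (by omega)
  obtain ⟨w, hw⟩ := hr.exists_walk_length_eq_dist
  rw [h] at hw
  obtain ⟨m, h1, h2, -⟩ := walk_length_two_struct w hw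
  exact ⟨m, h1, h2⟩

/-- Deleting the edge `ij` strictly decreases the betweenness of `i`, given witnesses of
mutual non-domination, in a graph where all edges lie in one component of diameter ≤ 2. -/
lemma btw_delE_lt {g : SimpleGraph V} {i j : V} (hadj : g.Adj i j)
    (hconn : ∀ a b c d : V, g.Adj a b → g.Adj c d → g.Reachable a c)
    (hdiam : ∀ y z : V, g.Reachable y z → g.dist y z ≤ 2)
    {k k' : V} (hik : g.Adj i k) (hkj : k ≠ j) (hknj : ¬ g.Adj j k)
    (hjk' : g.Adj j k') (hk'i : k' ≠ i) (hk'ni : ¬ g.Adj i k') :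
    btw (delE g i j) i < btw g i := by
  have hgg := addE_delE hadj
  have hij : i ≠ j := hadj.ne
  have hki : k ≠ i := fun h => (h ▸ hik).ne rfl
  have hjk : j ≠ k := fun h => hkj h.symm
  have hji : j ≠ i := fun h => hij h.symm
  have hreachjk : g.Reachable j k := hconn j i k i hadj.symm hik.symm
  have hdjk : g.dist j k = 2 := dist_eq_two' hreachjk hjk hknj (hdiam j k hreachjk)
  have hnadj0 : ¬ (delE g i j).Adj j k := fun h => hknj ((delE_le g i j) h)
  have hnadjji : ¬ (delE g i j).Adj j i := fun h => not_delE_adj g i j h.symm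
  -- main inequality at the pair (j, k)
  have main : (sigmaThr (delE g i j) j k i : ℝ) / (sigmaAll (delE g i j) j k)
      < (sigmaThr g j k i : ℝ) / (sigmaAll g j k) := by
    by_cases hc : ∃ m, m ≠ i ∧ g.Adj j m ∧ g.Adj m k
    · -- another common neighbour m: contribution drops from positive to 0
      obtain ⟨m, hmi, hjm, hmk⟩ := hc
      have hmj : m ≠ j := fun h => (h ▸ hjm).ne' rfl
      have hmk' : m ≠ k := fun h => (h ▸ hmk).ne rfl
      have hadj1 : (delE g i j).Adj j m := by
        rw [delE_adj_iff]
        refine ⟨hjm, fun he => ?_⟩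
        rw [Sym2.eq_iff] at he
        rcases he with ⟨hj, -⟩ | ⟨-, hm⟩
        · exact hji hj
        · exact hmi hm
      have hadj2 : (delE g i j).Adj m k := by
        rw [delE_adj_iff]
        refine ⟨hmk, fun he => ?_⟩
        rw [Sym2.eq_iff] at he
        rcases he with ⟨hm, -⟩ | ⟨hm, -⟩
        · exact hmi hm
        · exact hmj hm
      have hreach0 : (delE g i j).Reachable j k :=
        ⟨SimpleGraph.Walk.cons hadj1 (SimpleGraph.Walk.cons hadj2 SimpleGraph.Walk.nil)⟩
      have hdist0 : (delE g i j).dist j k = 2 := by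
        apply dist_eq_two' hreach0 hjk hnadj0
        have := SimpleGraph.dist_le
          (SimpleGraph.Walk.cons hadj1 (SimpleGraph.Walk.cons hadj2 SimpleGraph.Walk.nil))
        simpa using this
      rw [sigmaThr_eq_zero_of_dist_two_not_adj hdist0 hnadjji hji.symm hki.symm]
      rw [Nat.cast_zero, zero_div]
      -- φ(g, j, k, i) > 0 via the path j-i-k
      set p₁ : g.Walk j k :=
        SimpleGraph.Walk.cons hadj.symm (SimpleGraph.Walk.cons hik SimpleGraph.Walk.nil)
        with hp₁
      have hp₁path : p₁.IsPath := by
        rw [hp₁]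
        simp only [SimpleGraph.Walk.cons_isPath_iff, SimpleGraph.Walk.isPath_iff_eq_nil,
          SimpleGraph.Walk.support_cons, SimpleGraph.Walk.support_nil, List.mem_cons,
          List.mem_singleton, List.not_mem_nil, or_false]
        refine ⟨⟨trivial, fun h => hki h.symm⟩, ?_⟩
        rintro (rfl | rfl)
        · exact hji rfl
        · exact hjk rfl
      have hlen : p₁.length = g.dist j k := by rw [hdjk]; simp [hp₁]
      have ht : 0 < sigmaThr g j k i :=
        sigmaThr_pos_of_path ⟨p₁, hp₁path⟩ hlen (by simp [hp₁])
      have hs : 0 < sigmaAll g j k := sigmaAll_pos hreachjk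
      apply div_pos
      · exact_mod_cast ht
      · exact_mod_cast hs
    · -- i is the unique common neighbour
      push_neg at hc
      have hc' : ∀ m, g.Adj j m → g.Adj m k → m = i := by
        intro m h1 h2
        by_contra hmi
        exact (hc m hmi h1) h2
      -- φ(g, j, k, i) = 1
      have hall : ∀ p : g.Path j k, p.1.length = g.dist j k → i ∈ p.1.support := by
        intro p hp
        have hlen2 : p.1.length = 2 := by rw [hp, hdjk]
        obtain ⟨m, h1, h2, hsup, -⟩ := walk_length_two_edges p.1 hlen2
        have := hc' m h1 h2
        rw [hsup, this]
        simp
      have hphi1 : (sigmaThr g j k i : ℝ) / (sigmaAll g j k) = 1 := by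
        rw [sigmaThr_eq_sigmaAll hall]
        have hs : (0 : ℝ) < sigmaAll g j k := by exact_mod_cast sigmaAll_pos hreachjk
        exact div_self (ne_of_gt hs)
      rw [hphi1]
      -- now show φ(delE, j, k, i) < 1
      have hk'j : k' ≠ j := fun h => (h ▸ hjk').ne' rfl
      have hk'k : k' ≠ k := by
        intro h
        exact hknj (h ▸ hjk')
      have hnk'k : ¬ g.Adj k' k := by
        intro h
        exact hk'i (hc' k' hjk' h)
      have hreach' : g.Reachable k' k := hconn k' j k i hjk'.symm hik.symm
      have hdk'k : g.dist k' k = 2 := dist_eq_two' hreach' hk'k hnk'k (hdiam k' k hreach')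
      obtain ⟨m, hm1, hm2⟩ := exists_common_of_dist_two hdk'k
      have hmi : m ≠ i := by
        intro h
        exact hk'ni (h ▸ hm1).symm
      have hmj : m ≠ j := by
        intro h
        exact hknj (h ▸ hm2)
      have hmk' : m ≠ k' := fun h => (h ▸ hm1).ne' rfl
      have hmk : m ≠ k := fun h => (h ▸ hm2).ne rfl
      -- the path j - k' - m - k in delE g i j
      have he1 : (delE g i j).Adj j k' := by
        rw [delE_adj_iff]
        refine ⟨hjk', fun he => ?_⟩
        rw [Sym2.eq_iff] at he
        rcases he with ⟨hj, -⟩ | ⟨-, hk⟩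
        · exact hji hj
        · exact hk'i hk
      have he2 : (delE g i j).Adj k' m := by
        rw [delE_adj_iff]
        refine ⟨hm1, fun he => ?_⟩
        rw [Sym2.eq_iff] at he
        rcases he with ⟨hk, -⟩ | ⟨hk, -⟩
        · exact hk'i hk
        · exact hk'j hk
      have he3 : (delE g i j).Adj m k := by
        rw [delE_adj_iff]
        refine ⟨hm2, fun he => ?_⟩
        rw [Sym2.eq_iff] at he
        rcases he with ⟨hm, -⟩ | ⟨hm, -⟩
        · exact hmi hm
        · exact hmj hm
      set P : (delE g i j).Walk j k :=
        SimpleGraph.Walk.cons he1 (SimpleGraph.Walk.cons he2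
          (SimpleGraph.Walk.cons he3 SimpleGraph.Walk.nil)) with hP
      have hPpath : P.IsPath := by
        rw [hP]
        simp only [SimpleGraph.Walk.cons_isPath_iff, SimpleGraph.Walk.isPath_iff_eq_nil,
          SimpleGraph.Walk.support_cons, SimpleGraph.Walk.support_nil, List.mem_cons,
          List.mem_singleton, List.not_mem_nil, or_false]
        refine ⟨⟨⟨trivial, fun h => hmk h⟩, ?_⟩, ?_⟩
        · rintro (rfl | rfl)
          · exact hmk' rfl
          · exact hk'k rfl
        · rintro (rfl | rfl | rfl)
          · exact hk'j rfl
          · exact hmj rfl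
          · exact hjk rfl
      have hreach0 : (delE g i j).Reachable j k := ⟨P⟩
      have hdist0 : (delE g i j).dist j k = 3 := by
        have hle : (delE g i j).dist j k ≤ 3 := by
          have := SimpleGraph.dist_le P
          simpa [hP] using this
        have h0 : (delE g i j).dist j k ≠ 0 := fun h => hjk (hreach0.dist_eq_zero_iff.1 h)
        have h1 : (delE g i j).dist j k ≠ 1 :=
          fun h => hnadj0 (SimpleGraph.dist_eq_one_iff_adj.1 h)
        have h2 : (delE g i j).dist j k ≠ 2 := by
          intro h
          obtain ⟨m₀, hm₀1, hm₀2⟩ := exists_common_of_dist_two h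
          have := hc' m₀ ((delE_le g i j) hm₀1) ((delE_le g i j) hm₀2)
          rw [this] at hm₀1
          exact hnadjji hm₀1
        omega
      have hPlen : P.length = (delE g i j).dist j k := by rw [hdist0]; simp [hP]
      have hPsup : i ∉ P.support := by
        rw [hP]
        simp only [SimpleGraph.Walk.support_cons, SimpleGraph.Walk.support_nil, List.mem_cons,
          List.mem_singleton, List.not_mem_nil, or_false]
        rintro (rfl | rfl | rfl | rfl)
        · exact hji rfl
        · exact hk'i rfl
        · exact hmi rfl
        · exact hki rfl
      have hlt : sigmaThr (delE g i j) j k i < sigmaAll (delE g i j) j k :=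
        sigmaThr_lt_sigmaAll_of_witness ⟨P, hPpath⟩ hPlen hPsup
      have hs0 : (0 : ℝ) < sigmaAll (delE g i j) j k := by
        exact_mod_cast sigmaAll_pos hreach0
      rw [div_lt_one hs0]
      exact_mod_cast hlt
  -- assemble
  have hstrict : (sigmaThr (delE g i j) j k i : ℝ) / (sigmaAll (delE g i j) j k)
      < (sigmaThr (addE (delE g i j) i j) j k i : ℝ)
          / (sigmaAll (addE (delE g i j) i j) j k) := by
    rw [hgg]
    exact main
  have := btw_addE_strict (g := delE g i j) (not_delE_adj g i j) j k hjk hji hki hstrict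
  rwa [hgg] at this

end Sec6c
section Sec7
set_option maxHeartbeats 1000000
open SimpleGraph Finset

variable {V : Type*} [Fintype V]

lemma deg_addE_snd {g : SimpleGraph V} {i j : V} (hij : i ≠ j) (hna : ¬ g.Adj i j) :
    deg (addE g i j) j = deg g j + 1 := by
  rw [addE_comm]
  exact deg_addE_fst (Ne.symm hij) (fun h => hna h.symm)

lemma deg_delE_snd {g : SimpleGraph V} {i j : V} (h : g.Adj i j) :
    deg g j = deg (delE g i j) j + 1 := by
  rw [delE_comm]
  exact deg_delE_fst h.symm

omit [Fintype V] in
lemma exists_pos_lb {α : Type*} [Fintype α] (P : α → Prop) (f : α → ℝ)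
    (hf : ∀ a, P a → 0 < f a) : ∃ ε : ℝ, 0 < ε ∧ ∀ a, P a → ε ≤ f a := by
  classical
  by_cases hS : (Finset.univ.filter P).Nonempty
  · refine ⟨(Finset.univ.filter P).inf' hS f, ?_, ?_⟩
    · rw [Finset.lt_inf'_iff]
      intro b hb
      exact hf b (Finset.mem_filter.1 hb).2
    · intro a ha
      exact Finset.inf'_le f (Finset.mem_filter.2 ⟨Finset.mem_univ _, ha⟩)
  · exact ⟨1, one_pos, fun a ha =>
      absurd ⟨a, Finset.mem_filter.2 ⟨Finset.mem_univ _, ha⟩⟩ hS⟩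

lemma apsn_iff (g : SimpleGraph V) :
    APSN (fun v h => btw h v) g ↔
      ((∀ i j : V, i ≠ j → ¬ g.Adj i j →
          ¬ (btw g i < btw (addE g i j) i ∧ btw g j < btw (addE g i j) j)) ∧
       (∀ i j : V, g.Adj i j →
          btw (delE g i j) i < btw g i ∧ btw (delE g i j) j < btw g j)) := by
  constructor
  · rintro ⟨ε₀, hε, hst⟩
    constructor
    · intro i j hne hna
      rintro ⟨h1, h2⟩
      set c := min (ε₀ / 2) (min (btw (addE g i j) i - btw g i)
        (btw (addE g i j) j - btw g j) / 2) with hc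
      have hc0 : 0 < c := by
        apply lt_min (by linarith)
        apply div_pos _ (by norm_num)
        exact lt_min (by linarith) (by linarith)
      have hcε : c < ε₀ := lt_of_le_of_lt (min_le_left _ _) (by linarith)
      have hci : c < btw (addE g i j) i - btw g i := by
        calc c ≤ min (btw (addE g i j) i - btw g i) (btw (addE g i j) j - btw g j) / 2 :=
          min_le_right _ _
        _ < btw (addE g i j) i - btw g i := by
          have := min_le_left (btw (addE g i j) i - btw g i) (btw (addE g i j) j - btw g j)
          have h0 : 0 < min (btw (addE g i j) i - btw g i) (btw (addE g i j) j - btw g j) :=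
            lt_min (by linarith) (by linarith)
          linarith
      have hcj : c < btw (addE g i j) j - btw g j := by
        calc c ≤ min (btw (addE g i j) i - btw g i) (btw (addE g i j) j - btw g j) / 2 :=
          min_le_right _ _
        _ < btw (addE g i j) j - btw g j := by
          have := min_le_right (btw (addE g i j) i - btw g i) (btw (addE g i j) j - btw g j)
          have h0 : 0 < min (btw (addE g i j) i - btw g i) (btw (addE g i j) j - btw g j) :=
            lt_min (by linarith) (by linarith)
          linarith
      apply (hst c hc0 hcε).1 i j hne hna
      have hdi : ((deg (addE g i j) i : ℝ)) = (deg g i : ℝ) + 1 := by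
        rw [deg_addE_fst hne hna]
        push_cast
        ring
      have hdj : ((deg (addE g i j) j : ℝ)) = (deg g j : ℝ) + 1 := by
        rw [deg_addE_snd hne hna]
        push_cast
        ring
      refine ⟨?_, ?_, Or.inl ?_⟩
      · simp only [util]; rw [hdi]; linarith
      · simp only [util]; rw [hdj]; linarith
      · simp only [util]; rw [hdi]; linarith
    · intro i j hadj
      have hdi : ((deg g i : ℝ)) = (deg (delE g i j) i : ℝ) + 1 := by
        exact_mod_cast congrArg (Nat.cast (R := ℝ)) (deg_delE_fst hadj)
      have hdj : ((deg g j : ℝ)) = (deg (delE g i j) j : ℝ) + 1 := by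
        exact_mod_cast congrArg (Nat.cast (R := ℝ)) (deg_delE_snd hadj)
      set c := ε₀ / 2 with hc
      have hc0 : 0 < c := by linarith
      have hcε : c < ε₀ := by linarith
      have hni := (hst c hc0 hcε).2 i j hadj
      rw [ImprovingDel] at hni
      push_neg at hni
      obtain ⟨n1, n2⟩ := hni
      simp only [util] at n1 n2
      rw [hdi] at n1
      rw [hdj] at n2
      constructor
      · nlinarith [n1]
      · nlinarith [n2]
  · rintro ⟨hA, hB⟩
    classical
    have addPart : ∀ c : ℝ, 0 < c → ∀ i j : V, i ≠ j → ¬ g.Adj i j →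
        ¬ ImprovingAdd (fun v h => btw h v) c g i j := by
      intro c hc0 i j hne hna himp
      obtain ⟨h1, h2, -⟩ := himp
      apply hA i j hne hna
      have hdi : ((deg (addE g i j) i : ℝ)) = (deg g i : ℝ) + 1 := by
        rw [deg_addE_fst hne hna]; push_cast; ring
      have hdj : ((deg (addE g i j) j : ℝ)) = (deg g j : ℝ) + 1 := by
        rw [deg_addE_snd hne hna]; push_cast; ring
      simp only [util] at h1 h2
      rw [hdi] at h1
      rw [hdj] at h2
      constructor
      · nlinarith [h1]
      · nlinarith [h2]
    obtain ⟨ε₀, hpos, hkey⟩ := exists_pos_lb (fun p : V × V => g.Adj p.1 p.2)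
      (fun p : V × V => btw g p.1 - btw (delE g p.1 p.2) p.1)
      (fun p hp => sub_pos.2 (hB p.1 p.2 hp).1)
    refine ⟨ε₀, hpos, fun c hc0 hcε => ⟨fun i j hne hna => addPart c hc0 i j hne hna, ?_⟩⟩
    intro i j hadj himp
    have hdi : ((deg g i : ℝ)) = (deg (delE g i j) i : ℝ) + 1 := by
      exact_mod_cast congrArg (Nat.cast (R := ℝ)) (deg_delE_fst hadj)
    have hdj : ((deg g j : ℝ)) = (deg (delE g i j) j : ℝ) + 1 := by
      exact_mod_cast congrArg (Nat.cast (R := ℝ)) (deg_delE_snd hadj)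
    rcases himp with h | h
    · have hle : ε₀ ≤ btw g i - btw (delE g i j) i := hkey (i, j) hadj
      simp only [util] at h
      rw [hdi] at h
      nlinarith [h]
    · have hle : ε₀ ≤ btw g j - btw (delE g j i) j := hkey (j, i) hadj.symm
      rw [delE_comm] at hle
      simp only [util] at h
      rw [hdj] at h
      nlinarith [h]

end Sec7
section Sec8
open SimpleGraph Finset

variable {V : Type*} [Fintype V]

lemma deg_eq_zero_of_isolated {g : SimpleGraph V} {i : V} (h : ∀ k, ¬ g.Adj i k) :
    deg g i = 0 := by
  have he : g.neighborSet i = ∅ := Set.eq_empty_iff_forall_notMem.2 (fun k hk => h k hk)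
  rw [deg, he]
  simp

lemma btw_eq_zero_of_deg_le_one {g : SimpleGraph V} {i : V} (h : deg g i ≤ 1) :
    btw g i = 0 :=
  btw_eq_zero_of_sigmaThr_zero (fun _ _ _ hy hz =>
    sigmaThr_eq_zero_of_deg_le_one h (Ne.symm hy) (Ne.symm hz))

end Sec8

theorem statement_9 {V : Type*} [Fintype V] (g : SimpleGraph V) :
    APSN (fun v h => btw h v) g ↔
      -- at most one connected component with at least two vertices
      ((∀ i j k l : V, g.Adj i j → g.Adj k l → g.Reachable i k) ∧
       -- every vertex of that component has degree at least 2
       (∀ i : V, (∃ j, g.Adj i j) → 2 ≤ deg g i) ∧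
       -- the component has diameter exactly 2
       (∀ i j : V, g.Reachable i j → g.dist i j ≤ 2) ∧
       ((∃ i j : V, g.Adj i j) → ∃ i j : V, g.Reachable i j ∧ g.dist i j = 2) ∧
       -- edges are exactly the pairs where neither vertex dominates the other
       (∀ i j : V, i ≠ j → (∃ k, g.Adj i k) → (∃ k, g.Adj j k) →
         (g.Adj i j ↔
           ¬ (g.neighborSet i \ {j} ⊆ g.neighborSet j \ {i}) ∧
           ¬ (g.neighborSet j \ {i} ⊆ g.neighborSet i \ {j})))) := by
  rw [apsn_iff]
  constructor
  · rintro ⟨hA, hB⟩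
    have R1 : ∀ i j k l : V, g.Adj i j → g.Adj k l → g.Reachable i k := by
      intro a b c d hab hcd
      by_contra hr
      have hac : a ≠ c := fun h => hr (h ▸ SimpleGraph.Reachable.refl a)
      have hna : ¬ g.Adj a c := fun h => hr h.reachable
      refine hA a c hac hna ⟨btw_lt_addE_of_unreachable hr hab, ?_⟩
      rw [addE_comm]
      exact btw_lt_addE_of_unreachable (fun h => hr h.symm) hcd
    have R3 : ∀ i j : V, g.Reachable i j → g.dist i j ≤ 2 := by
      intro a b hr
      by_contra hd
      push_neg at hd
      obtain ⟨x, y, hxy⟩ := exists_dist_eq_three (show 3 ≤ g.dist a b by omega)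
      have hxyne : x ≠ y := by
        intro h
        rw [h, SimpleGraph.dist_self] at hxy
        omega
      have hxyna : ¬ g.Adj x y := by
        intro h
        have := SimpleGraph.dist_eq_one_iff_adj.2 h
        omega
      refine hA x y hxyne hxyna ⟨btw_lt_addE_of_dist_three hxy, ?_⟩
      rw [addE_comm]
      exact btw_lt_addE_of_dist_three (by rw [SimpleGraph.dist_comm]; exact hxy)
    refine ⟨R1, ?_, R3, ?_, ?_⟩
    · -- degree ≥ 2
      rintro i ⟨j, hij⟩
      by_contra hdeg
      push_neg at hdeg
      have h0 : btw g i = 0 := btw_eq_zero_of_deg_le_one (by omega)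
      have h1 := (hB i j hij).1
      have h2 := btw_nonneg (delE g i j) i
      linarith
    · -- diameter exactly 2
      rintro ⟨i, j, hij⟩
      by_contra hno
      push_neg at hno
      have h0 : btw g i = 0 := btw_eq_zero_of_sigmaThr_zero (fun y z hyz hy hz => by
        by_cases hr : g.Reachable y z
        · have hd2 := R3 y z hr
          have hdne := hno y z hr
          exact sigmaThr_eq_zero_of_dist_le_one (by omega) (Ne.symm hy) (Ne.symm hz)
        · exact sigmaThr_eq_zero hr i)
      have h1 := (hB i j hij).1
      have h2 := btw_nonneg (delE g i j) i
      linarith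
    · -- edge characterization
      rintro i j hij ⟨a, hia⟩ ⟨b, hjb⟩
      constructor
      · intro hadj
        constructor
        · intro hsub
          have hdom : ∀ k, g.Adj i k → k ≠ j → g.Adj j k := by
            intro k hk hkj
            exact (hsub ⟨hk, by simp [hkj]⟩).1
          have heq := btw_delE_eq_of_dominated hadj hdom R3
          have := (hB i j hadj).1
          linarith
        · intro hsub
          have hdom : ∀ k, g.Adj j k → k ≠ i → g.Adj i k := by
            intro k hk hki
            exact (hsub ⟨hk, by simp [hki]⟩).1
          have heq := btw_delE_eq_of_dominated hadj.symm hdom R3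
          rw [delE_comm] at heq
          have := (hB i j hadj).2
          linarith
      · rintro ⟨hns1, hns2⟩
        by_contra hna
        rw [Set.not_subset] at hns1 hns2
        obtain ⟨k, hk1, hk2⟩ := hns1
        obtain ⟨k', hk'1, hk'2⟩ := hns2
        have hik : g.Adj i k := hk1.1
        have hkj : k ≠ j := by
          have := hk1.2
          simpa using this
        have hki : k ≠ i := fun h => (h ▸ hik).ne rfl
        have hknj : ¬ g.Adj j k := fun h => hk2 ⟨h, by simp [hki]⟩
        have hjk' : g.Adj j k' := hk'1.1
        have hk'i : k' ≠ i := by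
          have := hk'1.2
          simpa using this
        have hk'j : k' ≠ j := fun h => (h ▸ hjk').ne rfl
        have hk'ni : ¬ g.Adj i k' := fun h => hk'2 ⟨h, by simp [hk'j]⟩
        have hreachjk : g.Reachable j k := R1 j b k i hjb hik.symm
        have hjk : j ≠ k := Ne.symm hkj
        have hdjk : g.dist j k = 2 := dist_eq_two' hreachjk hjk hknj (R3 j k hreachjk)
        have hreachik' : g.Reachable i k' := R1 i a k' j hia hjk'.symm
        have hik'ne : i ≠ k' := Ne.symm hk'i
        have hdik' : g.dist i k' = 2 := dist_eq_two' hreachik' hik'ne hk'ni (R3 i k' hreachik')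
        refine hA i j hij hna ⟨btw_lt_addE_of_witness hij hna hik hkj hknj hdjk, ?_⟩
        rw [addE_comm]
        exact btw_lt_addE_of_witness (Ne.symm hij) (fun h => hna h.symm) hjk' hk'i hk'ni hdik'
  · rintro ⟨R1, R2, R3, R4, R5⟩
    constructor
    · -- no improving addition
      rintro i j hne hna ⟨hsi, hsj⟩
      by_cases hi : ∃ k, g.Adj i k
      · by_cases hj : ∃ k, g.Adj j k
        · obtain ⟨a, hia⟩ := hi
          obtain ⟨b, hjb⟩ := hj
          have hrij : g.Reachable i j := R1 i a j b hia hjb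
          have hiff := R5 i j hne ⟨a, hia⟩ ⟨b, hjb⟩
          have hX : ¬ (¬ (g.neighborSet i \ {j} ⊆ g.neighborSet j \ {i}) ∧
              ¬ (g.neighborSet j \ {i} ⊆ g.neighborSet i \ {j})) :=
            fun hX => hna (hiff.2 hX)
          rcases not_and_or.1 hX with h | h
          · have hsub := not_not.1 h
            have hdom : ∀ k, g.Adj i k → k ≠ j → g.Adj j k := by
              intro k hk hkj
              exact (hsub ⟨hk, by simp [hkj]⟩).1
            have heq := btw_addE_eq_of_dominated hne hna hrij hdom R3
            linarith
          · have hsub := not_not.1 h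
            have hdom : ∀ k, g.Adj j k → k ≠ i → g.Adj i k := by
              intro k hk hki
              exact (hsub ⟨hk, by simp [hki]⟩).1
            have heq := btw_addE_eq_of_dominated (Ne.symm hne) (fun h => hna h.symm)
              hrij.symm hdom R3
            rw [addE_comm] at hsj
            linarith
        · -- j isolated
          push_neg at hj
          have h1 : btw g j = 0 := btw_eq_zero_of_deg_le_one
            (by rw [deg_eq_zero_of_isolated hj]; omega)
          have h2 : btw (addE g i j) j = 0 := btw_eq_zero_of_deg_le_one
            (by rw [deg_addE_snd hne hna, deg_eq_zero_of_isolated hj])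
          rw [h1, h2] at hsj
          exact lt_irrefl _ hsj
      · -- i isolated
        push_neg at hi
        have h1 : btw g i = 0 := btw_eq_zero_of_deg_le_one
          (by rw [deg_eq_zero_of_isolated hi]; omega)
        have h2 : btw (addE g i j) i = 0 := btw_eq_zero_of_deg_le_one
          (by rw [deg_addE_fst hne hna, deg_eq_zero_of_isolated hi])
        rw [h1, h2] at hsi
        exact lt_irrefl _ hsi
    · -- every deletion strictly hurts both endpoints
      intro i j hadj
      have hiff := R5 i j hadj.ne ⟨j, hadj⟩ ⟨i, hadj.symm⟩
      obtain ⟨hns1, hns2⟩ := hiff.1 hadj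
      rw [Set.not_subset] at hns1 hns2
      obtain ⟨k, hk1, hk2⟩ := hns1
      obtain ⟨k', hk'1, hk'2⟩ := hns2
      have hik : g.Adj i k := hk1.1
      have hkj : k ≠ j := by
        have := hk1.2
        simpa using this
      have hki : k ≠ i := fun h => (h ▸ hik).ne rfl
      have hknj : ¬ g.Adj j k := fun h => hk2 ⟨h, by simp [hki]⟩
      have hjk' : g.Adj j k' := hk'1.1
      have hk'i : k' ≠ i := by
        have := hk'1.2
        simpa using this
      have hk'j : k' ≠ j := fun h => (h ▸ hjk').ne rfl
      have hk'ni : ¬ g.Adj i k' := fun h => hk'2 ⟨h, by simp [hk'j]⟩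
      constructor
      · exact btw_delE_lt hadj R1 R3 hik hkj hknj hjk' hk'i hk'ni
      · have := btw_delE_lt hadj.symm R1 R3 hjk' hk'i hk'ni hik hkj hknj
        rwa [delE_comm] at this
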